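/- Let V be a finite-dimensional real inner-product-free vector space, and let h₁, h₂ be symmetric bilinear forms on V. Let W ⊂ V be a codimension-1 subspace. Assume h₁ restricted to W is positive definite, h₂ vanishes on W (i.e. h₂(w,w')=0 for all w,w' ∈ W), and h₂ induces a positive form on V/W (equivalently, h₂(y,y)>0 for some/any y ∉ W). Then there exists u₀ ∈ ℝ such that for every u > u₀ the form h_u := h₁ + u·h₂ is positive definite on V. -/

import Mathlib

/-- The linear algebra lemma: if `h₁` is positive definite on a codimension-1
subspace `W`, `h₂` vanishes on `W` and is positive on vectors outside `W`,
then `h₁ + u • h₂` is positive definite for all sufficiently large `u`. -/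
theorem pos_def_of_large_u
    (V : Type*) [AddCommGroup V] [Module ℝ V] [FiniteDimensional ℝ V]
    (h₁ h₂ : LinearMap.BilinForm ℝ V)
    (hsymm₁ : ∀ x y, h₁ x y = h₁ y x) (hsymm₂ : ∀ x y, h₂ x y = h₂ y x)
    (W : Submodule ℝ V)
    (hcodim : Module.finrank ℝ V = Module.finrank ℝ W + 1)
    (hposW : ∀ w ∈ W, w ≠ 0 → 0 < h₁ w w)
    (hvan : ∀ w ∈ W, ∀ w' ∈ W, h₂ w w' = 0)
    (hquot : ∀ y : V, y ∉ W → 0 < h₂ y y) :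
    ∃ u₀ : ℝ, ∀ u : ℝ, u > u₀ → ∀ x : V, x ≠ 0 →
      0 < (h₁ + u • h₂) x x := by
  -- there is a vector outside W
  have hWne : W ≠ ⊤ := by
    intro h
    rw [h] at hcodim
    rw [finrank_top] at hcodim
    omega
  obtain ⟨y, hy⟩ : ∃ y, y ∉ W := by
    by_contra h
    push_neg at h
    exact hWne (Submodule.eq_top_iff'.2 h)
  have hc : 0 < h₂ y y := hquot y hy
  -- h₂ kills W against y
  have hkey : ∀ w ∈ W, h₂ w y = 0 := by
    intro w hw
    by_contra ha
    have hyn : y + (-(h₂ y y + 1) / (2 * h₂ w y)) • w ∉ W := by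
      intro h
      have : y ∈ W := by
        have := W.sub_mem h (W.smul_mem (-(h₂ y y + 1) / (2 * h₂ w y)) hw)
        simpa using this
      exact hy this
    have hpos := hquot _ hyn
    have hexp : h₂ (y + (-(h₂ y y + 1) / (2 * h₂ w y)) • w)
        (y + (-(h₂ y y + 1) / (2 * h₂ w y)) • w) = -1 := by
      simp only [map_add, map_smul, LinearMap.add_apply, LinearMap.smul_apply, smul_eq_mul]
      rw [hsymm₂ y w, hvan w hw w hw]
      field_simp
      ring
    rw [hexp] at hpos
    linarith
  -- Riesz representative of w ↦ h₁ w y on W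
  obtain ⟨z₀, hz₀W, hdual⟩ : ∃ z₀ ∈ W, ∀ v ∈ W, h₁ z₀ v = h₁ v y := by
    have hb : (h₁.restrict W).Nondegenerate := by
      constructor
      all_goals
        intro w hw
        by_contra hwne
        have hne : (w : V) ≠ 0 := fun h => hwne (Subtype.coe_injective h)
        have hpos := hposW w w.2 hne
        have h0 : h₁ (w : V) (w : V) = 0 := hw w
        rw [h0] at hpos
        exact lt_irrefl 0 hpos
    refine ⟨(((h₁.restrict W).toDual hb).symm ((h₁.flip y).comp W.subtype) : W),
      Submodule.coe_mem _, fun v hv => ?_⟩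
    exact LinearMap.BilinForm.apply_toDual_symm_apply
      (hB := hb) (f := (h₁.flip y).comp W.subtype) (v := ⟨v, hv⟩)
  refine ⟨(h₁ z₀ z₀ - h₁ y y) / h₂ y y, fun u hu x hx => ?_⟩
  -- decompose x = w + t • y
  have hsup : W ⊔ (ℝ ∙ y) = ⊤ := by
    apply Submodule.eq_top_of_finrank_eq
    have hlt : W < W ⊔ (ℝ ∙ y) := by
      refine lt_of_le_of_ne le_sup_left ?_
      intro h
      have : y ∈ W ⊔ (ℝ ∙ y) :=
        Submodule.mem_sup_right (Submodule.mem_span_singleton_self y)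
      rw [← h] at this
      exact hy this
    have h1 := Submodule.finrank_lt_finrank_of_lt hlt
    have h2 := Submodule.finrank_le (W ⊔ (ℝ ∙ y))
    omega
  have hxmem : x ∈ W ⊔ (ℝ ∙ y) := hsup ▸ Submodule.mem_top
  obtain ⟨w, hw, z, hz, rfl⟩ := Submodule.mem_sup.1 hxmem
  obtain ⟨t, rfl⟩ := Submodule.mem_span_singleton.1 hz
  -- compute the quadratic forms
  have hh2 : h₂ (w + t • y) (w + t • y) = t ^ 2 * h₂ y y := by
    simp only [map_add, map_smul, LinearMap.add_apply, LinearMap.smul_apply, smul_eq_mul]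
    rw [hvan w hw w hw, hkey w hw, hsymm₂ y w, hkey w hw]
    ring
  have hh1 : h₁ (w + t • y) (w + t • y)
      = h₁ w w + 2 * t * h₁ w y + t ^ 2 * h₁ y y := by
    simp only [map_add, map_smul, LinearMap.add_apply, LinearMap.smul_apply, smul_eq_mul]
    rw [hsymm₁ y w]
    ring
  have hwz : h₁ z₀ w = h₁ w y := hdual w hw
  have hsq : h₁ (w + t • z₀) (w + t • z₀)
      = h₁ w w + 2 * t * h₁ w y + t ^ 2 * h₁ z₀ z₀ := by
    simp only [map_add, map_smul, LinearMap.add_apply, LinearMap.smul_apply, smul_eq_mul]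
    rw [hsymm₁ w z₀, hwz]
    ring
  have hmemsq : w + t • z₀ ∈ W := W.add_mem hw (W.smul_mem t hz₀W)
  have hsqnn : 0 ≤ h₁ (w + t • z₀) (w + t • z₀) := by
    rcases eq_or_ne (w + t • z₀) 0 with h | h
    · rw [h]; simp
    · exact le_of_lt (hposW _ hmemsq h)
  have huc : h₁ z₀ z₀ - h₁ y y < u * h₂ y y := by
    rw [gt_iff_lt, div_lt_iff₀ hc] at hu
    exact hu
  have hgoal : (h₁ + u • h₂) (w + t • y) (w + t • y)
      = h₁ (w + t • z₀) (w + t • z₀) + t ^ 2 * (h₁ y y - h₁ z₀ z₀ + u * h₂ y y) := by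
    simp only [LinearMap.add_apply, LinearMap.smul_apply, smul_eq_mul]
    rw [hh1, hh2, hsq]
    ring
  rw [hgoal]
  rcases eq_or_ne t 0 with ht | ht
  · subst ht
    have hwne : w ≠ 0 := by simpa using hx
    have hww := hposW w hw hwne
    have hsq0 : h₁ (w + (0 : ℝ) • z₀) (w + (0 : ℝ) • z₀) = h₁ w w := by
      simp
    rw [hsq0]
    simpa using hww
  · have ht2 : 0 < t ^ 2 := by positivity
    nlinarith [hsqnn, ht2, huc]
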